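/- Let Γ be a weighted congestion game fulfilling Conditions 1–2, Γ̂ its Ψ̂-game, and Φ̂(S) = ∑_{e∈𝔼} ∑_{k=0}^d (a_{e,k}/(k+1))·Ψ̂_{k+1}(U_e(S)). Then for every profile S, Φ̂(S) ≤ N·max_{u∈𝒩} ĉ_u(S) ≤ N^{d+1}·W^{d+1}·E·(d+1)!·max_{e∈𝔼} max_{0≤k≤d} a_{e,k}. -/

import Mathlib

/-- `hpoly k l` is the complete homogeneous symmetric polynomial of degree `k`
evaluated at the entries of the list `l`, i.e. the sum of all monomials of
total degree `k` in the elements of `l`. -/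
noncomputable def hpoly : ℕ → List ℝ → ℝ
  | 0, _ => 1
  | _ + 1, [] => 0
  | k + 1, a :: l => a * hpoly k (a :: l) + hpoly (k + 1) l
termination_by k l => (k, l.length)

/-- The `k`-order `Ψ̂`-function of a multiset `M` of reals:
`Ψ̂_k(M) = k! ·` (sum of all monomials of total degree `k` in the elements of `M`).
In particular `Ψ̂_0(M) = 1` and `Ψ̂_k(∅) = 0` for `k ≥ 1`. -/
noncomputable def psiHat (k : ℕ) (M : Multiset ℝ) : ℝ :=
  (Nat.factorial k : ℝ) * hpoly k M.toList

/-- A weighted congestion game with `N` players, `E` resources, polynomial latency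
functions of degree at most `d` (Condition 2, with coefficient-ratio bound `A`),
and players' weights in `[1, W]` (Condition 1). -/
structure WCGame (N E d : ℕ) (W A : ℝ) where
  /-- the strategy set of each player: a set of nonempty subsets of resources -/
  strat : Fin N → Set (Finset (Fin E))
  strat_nonempty : ∀ u, (strat u).Nonempty
  strat_valid : ∀ u, ∀ s ∈ strat u, s.Nonempty
  /-- the weight of each player -/
  w : Fin N → ℝ
  /-- `a e k` is the coefficient of `x^k` in the latency function of resource `e` -/
  a : Fin E → ℕ → ℝ
  hd : 1 ≤ d
  hW : 1 ≤ W
  hw_lower : ∀ u, 1 ≤ w u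
  hw_upper : ∀ u, w u ≤ W
  ha_nonneg : ∀ e k, 0 ≤ a e k
  ha_pos : ∀ e, 0 < ∑ k ∈ Finset.range (d + 1), a e k
  hA_pos : 0 < A
  hA_bound : ∀ e e' k k', k ≤ d → k' ≤ d → 0 < a e k → a e' k' ≤ A * a e k

namespace WCGame

/-- A (pure strategy) profile: a choice of a set of resources for every player. -/
abbrev Profile (N E : ℕ) := Fin N → Finset (Fin E)

variable {N E d : ℕ} {W A : ℝ}

/-- A profile is feasible if every player uses one of her strategies. -/
def IsProfile (G : WCGame N E d W A) (S : Profile N E) : Prop :=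
  ∀ u, S u ∈ G.strat u

/-- `U_e(S)`: the multiset of weights of the players using resource `e` in profile `S`. -/
noncomputable def load (G : WCGame N E d W A) (S : Profile N E) (e : Fin E) : Multiset ℝ :=
  (Finset.univ.filter (fun u => e ∈ S u)).val.map G.w

/-- The cost `c_u(S) = w_u · ∑_{e ∈ s_u} ∑_{k=0}^d a_{e,k} · L(U_e(S))^k` of player `u`
in the original game `Γ`. -/
noncomputable def cost (G : WCGame N E d W A) (S : Profile N E) (u : Fin N) : ℝ :=
  G.w u * ∑ e ∈ S u, ∑ k ∈ Finset.range (d + 1), G.a e k * (G.load S e).sum ^ k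

/-- The cost `ĉ_u(S) = w_u · ∑_{e ∈ s_u} ∑_{k=0}^d a_{e,k} · Ψ̂_k(U_e(S))` of player `u`
in the `Ψ̂`-game `Γ̂`. -/
noncomputable def hcost (G : WCGame N E d W A) (S : Profile N E) (u : Fin N) : ℝ :=
  G.w u * ∑ e ∈ S u, ∑ k ∈ Finset.range (d + 1), G.a e k * psiHat k (G.load S e)

/-- The potential function `Φ̂(S) = ∑_e ∑_{k=0}^d (a_{e,k}/(k+1)) · Ψ̂_{k+1}(U_e(S))`
of the `Ψ̂`-game. -/
noncomputable def potHat (G : WCGame N E d W A) (S : Profile N E) : ℝ :=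
  ∑ e : Fin E, ∑ k ∈ Finset.range (d + 1),
    G.a e k / ((k : ℝ) + 1) * psiHat (k + 1) (G.load S e)

/-- The approximate potential function `Φ(S) = ∑_e Ψ_e(L(U_e(S)))` with
`Ψ_e(x) = a_{e,0}·x + ∑_{k=1}^d a_{e,k}·(x^{k+1}/(k+1) + x^k/2)`. -/
noncomputable def pot (G : WCGame N E d W A) (S : Profile N E) : ℝ :=
  ∑ e : Fin E,
    (G.a e 0 * (G.load S e).sum +
      ∑ k ∈ Finset.Icc 1 d,
        G.a e k * ((G.load S e).sum ^ (k + 1) / ((k : ℝ) + 1) + (G.load S e).sum ^ k / 2))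

/-- `S` is a `ρ`-approximate pure Nash equilibrium w.r.t. the player costs `costFn`:
no player can decrease her cost by more than a factor `ρ` by a unilateral deviation. -/
def IsApproxPNE (G : WCGame N E d W A) (costFn : Profile N E → Fin N → ℝ) (ρ : ℝ)
    (S : Profile N E) : Prop :=
  ∀ u, ∀ s' ∈ G.strat u, costFn S u ≤ ρ * costFn (Function.update S u s') u

/-- `sstar u` is a best response of player `u` to `S₋ᵤ` w.r.t. the costs `costFn`. -/
def IsBestResponses (G : WCGame N E d W A) (costFn : Profile N E → Fin N → ℝ)
    (S : Profile N E) (sstar : Fin N → Finset (Fin E)) : Prop :=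
  ∀ u, sstar u ∈ G.strat u ∧
    ∀ s ∈ G.strat u, costFn (Function.update S u (sstar u)) u ≤ costFn (Function.update S u s) u

/-- One step of Algorithm 1 (the `1/(1-ε)` best response dynamic on the `Ψ̂`-game),
moving from profile `S` to profile `S'` by letting the chosen player `ut` (a player with a
`1/(1-ε)`-move of maximum cost reduction) switch to her best response `sstar ut`. -/
def AlgOneStep (G : WCGame N E d W A) (ε : ℝ) (S S' : Profile N E) (ut : Fin N)
    (sstar : Fin N → Finset (Fin E)) : Prop :=
  G.IsBestResponses G.hcost S sstar ∧
  G.hcost S ut > (1 / (1 - ε)) * G.hcost (Function.update S ut (sstar ut)) ut ∧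
  (∀ u, G.hcost S u > (1 / (1 - ε)) * G.hcost (Function.update S u (sstar u)) u →
    G.hcost S ut - G.hcost (Function.update S ut (sstar ut)) ut ≥
      G.hcost S u - G.hcost (Function.update S u (sstar u)) u) ∧
  S' = Function.update S ut (sstar ut)

/-- One step of Algorithm 2 (the refined `ρ/(1-ε)` best response dynamic on `Γ`),
moving from profile `S` to profile `S'` by letting the chosen player `ut` (a player
maximizing `c_u(S) - ρ·c_u(s_u^*, S₋ᵤ)` among players with `ρ/(1-ε)`-moves) switch to
her best response `sstar ut`. -/
def AlgTwoStep (G : WCGame N E d W A) (ρ ε : ℝ) (S S' : Profile N E) (ut : Fin N)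
    (sstar : Fin N → Finset (Fin E)) : Prop :=
  G.IsBestResponses G.cost S sstar ∧
  G.cost S ut > (ρ / (1 - ε)) * G.cost (Function.update S ut (sstar ut)) ut ∧
  (∀ u, G.cost S u > (ρ / (1 - ε)) * G.cost (Function.update S u (sstar u)) u →
    G.cost S ut - ρ * G.cost (Function.update S ut (sstar ut)) ut ≥
      G.cost S u - ρ * G.cost (Function.update S u (sstar u)) u) ∧
  S' = Function.update S ut (sstar ut)

/-- `c_max`: the maximum cost of a player over all (feasible) profiles in `Γ`. -/
noncomputable def cMax (G : WCGame N E d W A) : ℝ :=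
  sSup {x | ∃ S u, G.IsProfile S ∧ x = G.cost S u}

/-- `ĉ_max`: the maximum cost of a player over all (feasible) profiles in `Γ̂`. -/
noncomputable def hcMax (G : WCGame N E d W A) : ℝ :=
  sSup {x | ∃ S u, G.IsProfile S ∧ x = G.hcost S u}

/-- `Φ̂_min`: the minimum of the potential `Φ̂` over all (feasible) profiles. -/
noncomputable def potHatMin (G : WCGame N E d W A) : ℝ :=
  sInf {x | ∃ S, G.IsProfile S ∧ x = G.potHat S}

/-- `a_min⁺`: the minimum positive coefficient of the latency functions. -/
noncomputable def aMinPos (G : WCGame N E d W A) : ℝ :=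
  sInf {x | 0 < x ∧ ∃ e k, k ≤ d ∧ x = G.a e k}

end WCGame


section AuxLemmas

theorem hpoly_nonneg : ∀ (k : ℕ) (l : List ℝ), (∀ x ∈ l, 0 ≤ x) → 0 ≤ hpoly k l := by
  intro k l
  induction k, l using hpoly.induct with
  | case1 => intro _; simp [hpoly]
  | case2 => intro _; simp [hpoly]
  | case3 k a l ih1 ih2 =>
    intro h
    have ha : 0 ≤ a := h a (by simp)
    rw [show hpoly (k+1) (a :: l) = a * hpoly k (a :: l) + hpoly (k + 1) l from by
      rw [hpoly]]
    have := ih1 h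
    have := ih2 (fun x hx => h x (by simp [hx]))
    positivity

theorem hpoly_cons_le (k : ℕ) (a : ℝ) (l : List ℝ) (ha : 0 ≤ a)
    (hl : ∀ x ∈ l, 0 ≤ x) : hpoly k l ≤ hpoly k (a :: l) := by
  cases k with
  | zero => simp [hpoly]
  | succ k =>
    rw [show hpoly (k+1) (a :: l) = a * hpoly k (a :: l) + hpoly (k + 1) l from by
      rw [hpoly]]
    have h0 : 0 ≤ hpoly k (a :: l) := by
      apply hpoly_nonneg
      intro x hx
      rcases List.mem_cons.1 hx with h | h
      · exact h ▸ ha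
      · exact hl x h
    nlinarith

theorem hpoly_succ_le (k : ℕ) (l : List ℝ) (hl : ∀ x ∈ l, 0 ≤ x) :
    hpoly (k + 1) l ≤ l.sum * hpoly k l := by
  induction l with
  | nil => simp [hpoly]
  | cons a l ih =>
    have ha : 0 ≤ a := hl a (by simp)
    have hl' : ∀ x ∈ l, 0 ≤ x := fun x hx => hl x (by simp [hx])
    have hs : (0:ℝ) ≤ l.sum := List.sum_nonneg hl'
    rw [show hpoly (k+1) (a :: l) = a * hpoly k (a :: l) + hpoly (k + 1) l from by
      rw [hpoly], List.sum_cons, add_mul]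
    have h1 : hpoly (k+1) l ≤ l.sum * hpoly k l := ih hl'
    have h2 : hpoly k l ≤ hpoly k (a :: l) := hpoly_cons_le k a l ha hl'
    nlinarith

theorem hpoly_le_pow (k : ℕ) (l : List ℝ) (hl : ∀ x ∈ l, 0 ≤ x) :
    hpoly k l ≤ l.sum ^ k := by
  induction k with
  | zero => simp [hpoly]
  | succ k ih =>
    have hs : (0:ℝ) ≤ l.sum := List.sum_nonneg hl
    calc hpoly (k+1) l ≤ l.sum * hpoly k l := hpoly_succ_le k l hl
    _ ≤ l.sum * l.sum ^ k := by nlinarith [hpoly_nonneg k l hl]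
    _ = l.sum ^ (k+1) := by ring

theorem psiHat_nonneg (k : ℕ) (M : Multiset ℝ) (hM : ∀ x ∈ M, 0 ≤ x) :
    0 ≤ psiHat k M := by
  unfold psiHat
  have hL : ∀ x ∈ M.toList, 0 ≤ x := fun x hx => hM x (Multiset.mem_toList.1 hx)
  have := hpoly_nonneg k M.toList hL
  positivity

theorem psiHat_succ_le (k : ℕ) (M : Multiset ℝ) (hM : ∀ x ∈ M, 0 ≤ x) :
    psiHat (k+1) M ≤ ((k:ℝ)+1) * (M.sum * psiHat k M) := by
  unfold psiHat
  have hL : ∀ x ∈ M.toList, 0 ≤ x := fun x hx => hM x (Multiset.mem_toList.1 hx)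
  have h := hpoly_succ_le k M.toList hL
  have hs : M.toList.sum = M.sum := Multiset.sum_toList M
  have c : (0:ℝ) ≤ ((k:ℝ)+1) * (k.factorial : ℝ) := by positivity
  have h2 := mul_le_mul_of_nonneg_left h c
  rw [hs] at h2
  rw [Nat.factorial_succ]
  push_cast
  nlinarith [h2]

theorem psiHat_le_pow (k : ℕ) (M : Multiset ℝ) (hM : ∀ x ∈ M, 0 ≤ x) :
    psiHat k M ≤ (k.factorial : ℝ) * M.sum ^ k := by
  unfold psiHat
  have hL : ∀ x ∈ M.toList, 0 ≤ x := fun x hx => hM x (Multiset.mem_toList.1 hx)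
  have := hpoly_le_pow k M.toList hL
  rw [← Multiset.sum_toList M]
  exact mul_le_mul_of_nonneg_left this (by positivity)

namespace WCGame

variable {N E d : ℕ} {W A : ℝ}

theorem load_nonneg (G : WCGame N E d W A) (S : Profile N E) (e : Fin E) :
    ∀ x ∈ G.load S e, 0 ≤ x := by
  intro x hx
  rcases Multiset.mem_map.1 hx with ⟨u, _, rfl⟩
  linarith [G.hw_lower u]

theorem load_sum_eq (G : WCGame N E d W A) (S : Profile N E) (e : Fin E) :
    (G.load S e).sum = ∑ u ∈ Finset.univ.filter (fun u => e ∈ S u), G.w u := rfl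

theorem load_sum_nonneg (G : WCGame N E d W A) (S : Profile N E) (e : Fin E) :
    0 ≤ (G.load S e).sum :=
  Multiset.sum_nonneg (G.load_nonneg S e)

theorem load_sum_le (G : WCGame N E d W A) (S : Profile N E) (e : Fin E) :
    (G.load S e).sum ≤ (N : ℝ) * W := by
  rw [G.load_sum_eq S e]
  calc ∑ u ∈ Finset.univ.filter (fun u => e ∈ S u), G.w u
      ≤ ∑ _u ∈ Finset.univ.filter (fun u => e ∈ S u), W :=
        Finset.sum_le_sum fun u _ => G.hw_upper u
  _ = ((Finset.univ.filter (fun u => e ∈ S u)).card : ℝ) * W := by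
        rw [Finset.sum_const, nsmul_eq_mul]
  _ ≤ (N : ℝ) * W := by
        have h1 : (Finset.univ.filter (fun u => e ∈ S u)).card ≤ N := by
          calc (Finset.univ.filter (fun u => e ∈ S u)).card
              ≤ (Finset.univ : Finset (Fin N)).card := Finset.card_filter_le _ _
          _ = N := by simp
        have h2 : (0:ℝ) ≤ W := le_trans zero_le_one G.hW
        have : ((Finset.univ.filter (fun u => e ∈ S u)).card : ℝ) ≤ (N : ℝ) := by
          exact_mod_cast h1
        nlinarith

end WCGame

end AuxLemmas

open WCGame in
/-- Inequality (6): for every profile `S`,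
`Φ̂(S) ≤ N·max_u ĉ_u(S) ≤ N^{d+1}·W^{d+1}·E·(d+1)!·max_{e,k} a_{e,k}`. -/
theorem potHat_le_N_mul_max_hcost {N E d : ℕ} {W A : ℝ}
    (G : WCGame N E d W A) (hN : 0 < N) (hE : 0 < E)
    (S : Profile N E) (hS : G.IsProfile S) :
    G.potHat S ≤ (N : ℝ) * sSup {x | ∃ u : Fin N, x = G.hcost S u} ∧
      (N : ℝ) * sSup {x | ∃ u : Fin N, x = G.hcost S u} ≤
        (N : ℝ) ^ (d + 1) * W ^ (d + 1) * (E : ℝ) * (Nat.factorial (d + 1) : ℝ) *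
          sSup {x | ∃ e : Fin E, ∃ k : ℕ, k ≤ d ∧ x = G.a e k} := by
  classical
  set Msup := sSup {x | ∃ u : Fin N, x = G.hcost S u} with hMsup_def
  set asup := sSup {x | ∃ e : Fin E, ∃ k : ℕ, k ≤ d ∧ x = G.a e k} with hasup_def
  -- basic facts about the sup of player costs
  have hNset : {x | ∃ u : Fin N, x = G.hcost S u} = Set.range (G.hcost S) := by
    ext x; simp [eq_comm]
  have hbdd : BddAbove {x | ∃ u : Fin N, x = G.hcost S u} := by
    rw [hNset]; exact (Set.finite_range _).bddAbove
  have hne : {x | ∃ u : Fin N, x = G.hcost S u}.Nonempty := ⟨_, ⟨⟨0, hN⟩, rfl⟩⟩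
  have hle_sup : ∀ u, G.hcost S u ≤ Msup := fun u => le_csSup hbdd ⟨u, rfl⟩
  -- basic facts about the sup of coefficients
  have hSa : {x | ∃ e : Fin E, ∃ k : ℕ, k ≤ d ∧ x = G.a e k} =
      ↑((Finset.univ ×ˢ Finset.range (d+1)).image (fun p : Fin E × ℕ => G.a p.1 p.2)) := by
    ext x
    constructor
    · rintro ⟨e, k, hk, rfl⟩
      exact Finset.mem_coe.2 (Finset.mem_image.2 ⟨(e, k), Finset.mem_product.2
        ⟨Finset.mem_univ _, Finset.mem_range.2 (Nat.lt_succ_of_le hk)⟩, rfl⟩)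
    · intro hx
      rcases Finset.mem_image.1 (Finset.mem_coe.1 hx) with ⟨p, hp, rfl⟩
      exact ⟨p.1, p.2, Nat.lt_succ_iff.1 (Finset.mem_range.1 (Finset.mem_product.1 hp).2), rfl⟩
  have hbdda : BddAbove {x | ∃ e : Fin E, ∃ k : ℕ, k ≤ d ∧ x = G.a e k} := by
    rw [hSa]; exact Finset.bddAbove _
  have ha_le_asup : ∀ (e : Fin E) (k : ℕ), k ≤ d → G.a e k ≤ asup :=
    fun e k hk => le_csSup hbdda ⟨e, k, hk, rfl⟩
  have hasup0 : 0 ≤ asup :=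
    le_trans (G.ha_nonneg ⟨0, hE⟩ 0) (ha_le_asup ⟨0, hE⟩ 0 (Nat.zero_le d))
  have hW0 : (0:ℝ) ≤ W := le_trans zero_le_one G.hW
  have hN1 : (1:ℝ) ≤ (N:ℝ) := by exact_mod_cast hN
  -- nonnegativity of psiHat terms
  have hψ0 : ∀ (e : Fin E) (k : ℕ), 0 ≤ psiHat k (G.load S e) :=
    fun e k => psiHat_nonneg k _ (G.load_nonneg S e)
  have hinner0 : ∀ e : Fin E,
      0 ≤ ∑ k ∈ Finset.range (d+1), G.a e k * psiHat k (G.load S e) :=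
    fun e => Finset.sum_nonneg fun k _ => mul_nonneg (G.ha_nonneg e k) (hψ0 e k)
  -- Step 1 : potHat S ≤ ∑_u hcost S u
  have h1 : G.potHat S ≤ ∑ e : Fin E,
      (G.load S e).sum * ∑ k ∈ Finset.range (d+1), G.a e k * psiHat k (G.load S e) := by
    unfold WCGame.potHat
    apply Finset.sum_le_sum
    intro e _
    rw [Finset.mul_sum]
    apply Finset.sum_le_sum
    intro k _
    have hψ : psiHat (k+1) (G.load S e)
        ≤ ((k:ℝ)+1) * ((G.load S e).sum * psiHat k (G.load S e)) :=
      psiHat_succ_le k _ (G.load_nonneg S e)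
    have hk1 : (0:ℝ) < (k:ℝ) + 1 := by positivity
    have hc : 0 ≤ G.a e k / ((k:ℝ)+1) := div_nonneg (G.ha_nonneg e k) (le_of_lt hk1)
    calc G.a e k / ((k:ℝ)+1) * psiHat (k+1) (G.load S e)
        ≤ G.a e k / ((k:ℝ)+1) * (((k:ℝ)+1) * ((G.load S e).sum * psiHat k (G.load S e))) :=
          mul_le_mul_of_nonneg_left hψ hc
    _ = (G.load S e).sum * (G.a e k * psiHat k (G.load S e)) := by
          field_simp
  have hswap : ∀ g : Fin E → ℝ, (∑ u : Fin N, G.w u * ∑ e ∈ S u, g e)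
      = ∑ e : Fin E, (∑ u ∈ Finset.univ.filter (fun u => e ∈ S u), G.w u) * g e := by
    intro g
    have hrow : ∀ u : Fin N, G.w u * ∑ e ∈ S u, g e
        = ∑ e : Fin E, (if e ∈ S u then G.w u * g e else 0) := by
      intro u
      rw [Finset.mul_sum, Finset.sum_ite_mem, Finset.univ_inter]
    simp_rw [hrow]
    rw [Finset.sum_comm]
    refine Finset.sum_congr rfl fun e _ => ?_
    rw [← Finset.sum_filter, ← Finset.sum_mul]
  have h2 : (∑ u : Fin N, G.hcost S u) = ∑ e : Fin E,
      (G.load S e).sum * ∑ k ∈ Finset.range (d+1), G.a e k * psiHat k (G.load S e) := by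
    unfold WCGame.hcost
    rw [hswap (fun e => ∑ k ∈ Finset.range (d+1), G.a e k * psiHat k (G.load S e))]
    refine Finset.sum_congr rfl fun e _ => ?_
    rw [G.load_sum_eq S e]
  have hstep1 : G.potHat S ≤ (N:ℝ) * Msup := by
    calc G.potHat S ≤ ∑ e : Fin E,
        (G.load S e).sum * ∑ k ∈ Finset.range (d+1), G.a e k * psiHat k (G.load S e) := h1
    _ = ∑ u : Fin N, G.hcost S u := h2.symm
    _ ≤ ∑ _u : Fin N, Msup := Finset.sum_le_sum fun u _ => hle_sup u
    _ = (N:ℝ) * Msup := by rw [Finset.sum_const, nsmul_eq_mul]; simp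
  -- Step 2 : bound each hcost
  have hNW1 : (1:ℝ) ≤ (N:ℝ) * W := by nlinarith [G.hW]
  have hψb : ∀ (e : Fin E) (k : ℕ), k ≤ d →
      psiHat k (G.load S e) ≤ (d.factorial : ℝ) * ((N:ℝ)*W)^d := by
    intro e k hk
    have hsum0 := G.load_sum_nonneg S e
    have hsum := G.load_sum_le S e
    calc psiHat k (G.load S e) ≤ (k.factorial : ℝ) * (G.load S e).sum ^ k :=
          psiHat_le_pow k _ (G.load_nonneg S e)
    _ ≤ (k.factorial : ℝ) * ((N:ℝ)*W)^k := by
          have := pow_le_pow_left₀ hsum0 hsum k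
          have h0 : (0:ℝ) ≤ (k.factorial : ℝ) := by positivity
          nlinarith
    _ ≤ (d.factorial : ℝ) * ((N:ℝ)*W)^d := by
          have hf : (k.factorial : ℝ) ≤ (d.factorial : ℝ) := by
            exact_mod_cast Nat.factorial_le hk
          have hp : ((N:ℝ)*W)^k ≤ ((N:ℝ)*W)^d := pow_le_pow_right₀ hNW1 hk
          have h0 : (0:ℝ) ≤ ((N:ℝ)*W)^k := by positivity
          have h1 : (0:ℝ) ≤ (d.factorial : ℝ) := by positivity
          nlinarith
  have hC0 : 0 ≤ asup * ((d.factorial : ℝ) * ((N:ℝ)*W)^d) := by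
    apply mul_nonneg hasup0
    positivity
  have hinner : ∀ e : Fin E, ∑ k ∈ Finset.range (d+1), G.a e k * psiHat k (G.load S e)
      ≤ ((d:ℝ)+1) * (asup * ((d.factorial : ℝ) * ((N:ℝ)*W)^d)) := by
    intro e
    calc ∑ k ∈ Finset.range (d+1), G.a e k * psiHat k (G.load S e)
        ≤ ∑ _k ∈ Finset.range (d+1), asup * ((d.factorial : ℝ) * ((N:ℝ)*W)^d) := by
          apply Finset.sum_le_sum
          intro k hk
          have hk' : k ≤ d := Nat.lt_succ_iff.1 (Finset.mem_range.1 hk)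
          exact mul_le_mul (ha_le_asup e k hk') (hψb e k hk') (hψ0 e k) hasup0
    _ = ((d:ℝ)+1) * (asup * ((d.factorial : ℝ) * ((N:ℝ)*W)^d)) := by
          rw [Finset.sum_const, Finset.card_range, nsmul_eq_mul]
          push_cast
          ring
  have hkey : ∀ u, G.hcost S u ≤ (N:ℝ)^d * W^(d+1) * (E:ℝ) * ((d+1).factorial : ℝ) * asup := by
    intro u
    have hsum_nonneg : 0 ≤ ∑ e ∈ S u, ∑ k ∈ Finset.range (d+1),
        G.a e k * psiHat k (G.load S e) := Finset.sum_nonneg fun e _ => hinner0 e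
    have hcard : ((S u).card : ℝ) ≤ (E:ℝ) := by
      have : (S u).card ≤ E := by
        calc (S u).card ≤ (Finset.univ : Finset (Fin E)).card := Finset.card_le_univ _
        _ = E := by simp
      exact_mod_cast this
    calc G.hcost S u = G.w u * ∑ e ∈ S u, ∑ k ∈ Finset.range (d+1),
          G.a e k * psiHat k (G.load S e) := rfl
    _ ≤ W * ∑ e ∈ S u, ∑ k ∈ Finset.range (d+1), G.a e k * psiHat k (G.load S e) :=
          mul_le_mul_of_nonneg_right (G.hw_upper u) hsum_nonneg
    _ ≤ W * ((E:ℝ) * (((d:ℝ)+1) * (asup * ((d.factorial : ℝ) * ((N:ℝ)*W)^d)))) := by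
          apply mul_le_mul_of_nonneg_left _ hW0
          calc ∑ e ∈ S u, ∑ k ∈ Finset.range (d+1), G.a e k * psiHat k (G.load S e)
              ≤ ∑ _e ∈ S u, ((d:ℝ)+1) * (asup * ((d.factorial : ℝ) * ((N:ℝ)*W)^d)) :=
                Finset.sum_le_sum fun e _ => hinner e
          _ = ((S u).card : ℝ) * (((d:ℝ)+1) * (asup * ((d.factorial : ℝ) * ((N:ℝ)*W)^d))) := by
                rw [Finset.sum_const, nsmul_eq_mul]
          _ ≤ (E:ℝ) * (((d:ℝ)+1) * (asup * ((d.factorial : ℝ) * ((N:ℝ)*W)^d))) := by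
                apply mul_le_mul_of_nonneg_right hcard
                positivity
    _ = (N:ℝ)^d * W^(d+1) * (E:ℝ) * ((d+1).factorial : ℝ) * asup := by
          rw [Nat.factorial_succ]
          push_cast
          ring
  have hsup_le : Msup ≤ (N:ℝ)^d * W^(d+1) * (E:ℝ) * ((d+1).factorial : ℝ) * asup := by
    apply csSup_le hne
    rintro x ⟨u, rfl⟩
    exact hkey u
  refine ⟨hstep1, ?_⟩
  calc (N:ℝ) * Msup ≤ (N:ℝ) * ((N:ℝ)^d * W^(d+1) * (E:ℝ) * ((d+1).factorial : ℝ) * asup) :=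
        mul_le_mul_of_nonneg_left hsup_le (by positivity)
  _ = (N:ℝ)^(d+1) * W^(d+1) * (E:ℝ) * ((d+1).factorial : ℝ) * asup := by ring
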